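/- (Corollary 2.2, pointwise form.) Suppose V = V₁ ⊕ V₂ ⊕ V₃ is an orthogonal direct sum of three nonzero J-invariant subspaces and R is of product type with respect to this decomposition (i.e., R(X,Y,Z,U) = 0 whenever each of the four arguments lies in V₁ ∪ V₂ ∪ V₃ and not all four arguments lie in the same V_j). Then the generalized Bochner curvature tensor of R vanishes, B* = 0, if and only if R(X,JX,JX,X) = 0 for all X ∈ V (i.e., the holomorphic sectional curvature is identically zero). -/

import Mathlib

open RealInnerProductSpace
open scoped BigOperators

noncomputable section

/-- A (curried) 4-linear form on `V`. -/
abbrev Tensor4 (V : Type*) [NormedAddCommGroup V] [InnerProductSpace ℝ V] :=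
  V →ₗ[ℝ] V →ₗ[ℝ] V →ₗ[ℝ] V →ₗ[ℝ] ℝ

variable {V : Type*} [NormedAddCommGroup V] [InnerProductSpace ℝ V]

/-- `J` is an orthogonal complex structure: `J ∘ J = -id` and `g(JX, JY) = g(X, Y)`. -/
def OrthJ (J : V →ₗ[ℝ] V) : Prop :=
  (∀ X : V, J (J X) = -X) ∧ (∀ X Y : V, ⟪J X, J Y⟫ = ⟪X, Y⟫)

/-- `R` is a curvature-like tensor. -/
def CurvatureLike (R : Tensor4 V) : Prop :=
  (∀ X Y Z U : V, R X Y Z U = - R Y X Z U) ∧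
  (∀ X Y Z U : V, R X Y Z U = - R X Y U Z) ∧
  (∀ X Y Z U : V, R X Y Z U = R Z U X Y) ∧
  (∀ X Y Z U : V, R X Y Z U + R Y Z X U + R Z X Y U = 0)

/-- `R` is an RK-tensor: `R(X,Y,Z,U) = R(JX,JY,JZ,JU)`. -/
def IsRK (J : V →ₗ[ℝ] V) (R : Tensor4 V) : Prop :=
  ∀ X Y Z U : V, R X Y Z U = R (J X) (J Y) (J Z) (J U)

/-- The tensor `R*` associated to `R` and `J`. -/
def Rstar (J : V →ₗ[ℝ] V) (R : Tensor4 V) (X Y Z U : V) : ℝ :=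
  (3 / 16) * (R X Y Z U + R X Y (J Z) (J U) + R (J X) (J Y) Z U +
      R (J X) (J Y) (J Z) (J U)) +
  (1 / 16) * (R (J X) (J Z) Y U - R (J Y) (J Z) X U + R X Z (J Y) (J U) -
      R Y Z (J X) (J U) + R Y (J Z) (J X) U - R X (J Z) (J Y) U +
      R (J Y) Z X (J U) - R (J X) Z Y (J U))

variable {ι : Type*} [Fintype ι]

/-- The Ricci form `S(X,Y) = Σᵢ R(X,Eᵢ,Eᵢ,Y)`. -/
def ric (b : OrthonormalBasis ι ℝ V) (R : Tensor4 V) (X Y : V) : ℝ :=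
  ∑ i, R X (b i) (b i) Y

/-- `S'(X,Y) = Σᵢ R(X,Eᵢ,JEᵢ,JY)`. -/
def ric' (J : V →ₗ[ℝ] V) (b : OrthonormalBasis ι ℝ V) (R : Tensor4 V) (X Y : V) : ℝ :=
  ∑ i, R X (b i) (J (b i)) (J Y)

/-- `S*(X,Y) = Σᵢ R*(X,Eᵢ,Eᵢ,Y)`. -/
def ricStar (J : V →ₗ[ℝ] V) (b : OrthonormalBasis ι ℝ V) (R : Tensor4 V) (X Y : V) : ℝ :=
  ∑ i, Rstar J R X (b i) (b i) Y

/-- The scalar curvature `τ = Σᵢ S(Eᵢ,Eᵢ)`. -/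
def scal (b : OrthonormalBasis ι ℝ V) (R : Tensor4 V) : ℝ :=
  ∑ i, ric b R (b i) (b i)

/-- `τ' = Σᵢ S'(Eᵢ,Eᵢ)`. -/
def scal' (J : V →ₗ[ℝ] V) (b : OrthonormalBasis ι ℝ V) (R : Tensor4 V) : ℝ :=
  ∑ i, ric' J b R (b i) (b i)

/-- `τ* = Σᵢ S*(Eᵢ,Eᵢ)`. -/
def scalStar (J : V →ₗ[ℝ] V) (b : OrthonormalBasis ι ℝ V) (R : Tensor4 V) : ℝ :=
  ∑ i, ricStar J b R (b i) (b i)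

/-- The operator `φ` applied to a bilinear form `Q`. -/
def phi (Q : V → V → ℝ) (X Y Z U : V) : ℝ :=
  ⟪X, U⟫ * Q Y Z - ⟪X, Z⟫ * Q Y U + ⟪Y, Z⟫ * Q X U - ⟪Y, U⟫ * Q X Z

/-- The operator `ψ` applied to a bilinear form `Q`. -/
def psi (J : V →ₗ[ℝ] V) (Q : V → V → ℝ) (X Y Z U : V) : ℝ :=
  ⟪X, J U⟫ * Q Y (J Z) - ⟪X, J Z⟫ * Q Y (J U) - 2 * ⟪X, J Y⟫ * Q Z (J U) +
  ⟪Y, J Z⟫ * Q X (J U) - ⟪Y, J U⟫ * Q X (J Z) - 2 * ⟪Z, J U⟫ * Q X (J Y)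

/-- `π₁(X,Y,Z,U) = g(X,U)g(Y,Z) − g(X,Z)g(Y,U)`. -/
def pi1 (X Y Z U : V) : ℝ :=
  ⟪X, U⟫ * ⟪Y, Z⟫ - ⟪X, Z⟫ * ⟪Y, U⟫

/-- `π₂(X,Y,Z,U) = g(X,JU)g(Y,JZ) − g(X,JZ)g(Y,JU) − 2g(X,JY)g(Z,JU)`. -/
def pi2 (J : V →ₗ[ℝ] V) (X Y Z U : V) : ℝ :=
  ⟪X, J U⟫ * ⟪Y, J Z⟫ - ⟪X, J Z⟫ * ⟪Y, J U⟫ - 2 * ⟪X, J Y⟫ * ⟪Z, J U⟫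

/-- The generalized Bochner curvature tensor `B*`. -/
def Bstar (m : ℕ) (J : V →ₗ[ℝ] V) (b : OrthonormalBasis ι ℝ V) (R : Tensor4 V)
    (X Y Z U : V) : ℝ :=
  Rstar J R X Y Z U
    - (1 / (2 * ((m : ℝ) + 2))) *
        (phi (ricStar J b R) X Y Z U + psi J (ricStar J b R) X Y Z U)
    + (scalStar J b R / (4 * ((m : ℝ) + 1) * ((m : ℝ) + 2))) *
        (pi1 X Y Z U + pi2 J X Y Z U)

/-- The Bochner curvature tensor `B` of an RK-tensor. -/
def Bochner (m : ℕ) (J : V →ₗ[ℝ] V) (b : OrthonormalBasis ι ℝ V) (R : Tensor4 V)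
    (X Y Z U : V) : ℝ :=
  R X Y Z U
    - (1 / (8 * ((m : ℝ) + 2))) *
        (phi (fun x y => ric b R x y + 3 * ric' J b R x y) X Y Z U +
         psi J (fun x y => ric b R x y + 3 * ric' J b R x y) X Y Z U)
    - (1 / (8 * ((m : ℝ) - 2))) *
        (3 * phi (fun x y => ric b R x y - ric' J b R x y) X Y Z U -
         psi J (fun x y => ric b R x y - ric' J b R x y) X Y Z U)
    + ((scal b R + 3 * scal' J b R) / (16 * ((m : ℝ) + 1) * ((m : ℝ) + 2))) *
        (pi1 X Y Z U + pi2 J X Y Z U)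
    + ((scal b R - scal' J b R) / (16 * ((m : ℝ) - 1) * ((m : ℝ) - 2))) *
        (3 * pi1 X Y Z U - pi2 J X Y Z U)

lemma T4_neg1 (R : Tensor4 V) (a Y Z U : V) : R (-a) Y Z U = - R a Y Z U := by
  rw [← neg_one_smul ℝ a, map_smul]; simp

lemma T4_neg2 (R : Tensor4 V) (X a Z U : V) : R X (-a) Z U = - R X a Z U := by
  rw [← neg_one_smul ℝ a, map_smul]; simp

lemma T4_neg3 (R : Tensor4 V) (X Y a U : V) : R X Y (-a) U = - R X Y a U := by
  rw [← neg_one_smul ℝ a, map_smul]; simp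

section AuxLemmas

variable (J : V →ₗ[ℝ] V) (R : Tensor4 V)

lemma Rstar_add1 (a b Y Z U : V) :
    Rstar J R (a + b) Y Z U = Rstar J R a Y Z U + Rstar J R b Y Z U := by
  simp only [Rstar, map_add, LinearMap.add_apply]; ring

lemma Rstar_add2 (X a b Z U : V) :
    Rstar J R X (a + b) Z U = Rstar J R X a Z U + Rstar J R X b Z U := by
  simp only [Rstar, map_add, LinearMap.add_apply]; ring

lemma Rstar_add3 (X Y a b U : V) :
    Rstar J R X Y (a + b) U = Rstar J R X Y a U + Rstar J R X Y b U := by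
  simp only [Rstar, map_add, LinearMap.add_apply]; ring

lemma Rstar_add4 (X Y Z a b : V) :
    Rstar J R X Y Z (a + b) = Rstar J R X Y Z a + Rstar J R X Y Z b := by
  simp only [Rstar, map_add, LinearMap.add_apply]; ring

lemma Rstar_neg1 (a Y Z U : V) : Rstar J R (-a) Y Z U = - Rstar J R a Y Z U := by
  simp only [Rstar, map_neg, T4_neg1, T4_neg2, T4_neg3, LinearMap.neg_apply]; ring

lemma Rstar_neg2 (X a Z U : V) : Rstar J R X (-a) Z U = - Rstar J R X a Z U := by
  simp only [Rstar, map_neg, T4_neg1, T4_neg2, T4_neg3, LinearMap.neg_apply]; ring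

lemma Rstar_neg3 (X Y a U : V) : Rstar J R X Y (-a) U = - Rstar J R X Y a U := by
  simp only [Rstar, map_neg, T4_neg1, T4_neg2, T4_neg3, LinearMap.neg_apply]; ring

lemma Rstar_neg4 (X Y Z a : V) : Rstar J R X Y Z (-a) = - Rstar J R X Y Z a := by
  simp only [Rstar, map_neg, T4_neg1, T4_neg2, T4_neg3, LinearMap.neg_apply]; ring

lemma Rstar_zero1 (Y Z U : V) : Rstar J R 0 Y Z U = 0 := by
  simp [Rstar]

lemma Rstar_zero4 (X Y Z : V) : Rstar J R X Y Z 0 = 0 := by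
  simp [Rstar]

lemma Rstar_k2 (hJ2 : ∀ v : V, J (J v) = -v) (X Y Z U : V) :
    Rstar J R X Y (J Z) (J U) = Rstar J R X Y Z U := by
  simp only [Rstar, hJ2, map_neg, T4_neg1, T4_neg2, T4_neg3, LinearMap.neg_apply, neg_neg]; ring

lemma Rstar_k1 (hJ2 : ∀ v : V, J (J v) = -v) (X Y Z U : V) :
    Rstar J R (J X) (J Y) Z U = Rstar J R X Y Z U := by
  simp only [Rstar, hJ2, map_neg, T4_neg1, T4_neg2, T4_neg3, LinearMap.neg_apply, neg_neg]; ring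

lemma Rstar_a1 (hR : CurvatureLike R) (X Y Z U : V) :
    Rstar J R Y X Z U = - Rstar J R X Y Z U := by
  simp only [Rstar]
  linarith [hR.1 X Y Z U, hR.1 X Y (J Z) (J U), hR.1 (J X) (J Y) Z U,
    hR.1 (J X) (J Y) (J Z) (J U)]

lemma Rstar_a2 (hR : CurvatureLike R) (X Y Z U : V) :
    Rstar J R X Y U Z = - Rstar J R X Y Z U := by
  simp only [Rstar]
  linarith [hR.2.1 X Y Z U, hR.2.1 X Y (J Z) (J U), hR.2.1 X (J Y) Z (J U),
    hR.2.2.2 X (J Y) Z (J U), hR.2.1 X (J Y) (J Z) U, hR.2.2.2 X (J Y) (J Z) U,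
    hR.2.1 (J X) Y Z (J U), hR.2.2.2 (J X) Y Z (J U), hR.2.1 (J X) Y (J Z) U,
    hR.2.2.2 (J X) Y (J Z) U, hR.2.1 (J X) (J Y) Z U, hR.2.1 (J X) (J Y) (J Z) (J U),
    hR.2.2.2 X (J Y) U (J Z), hR.2.2.2 X (J Y) (J U) Z, hR.2.2.2 (J X) Y U (J Z),
    hR.2.2.2 (J X) Y (J U) Z, hR.1 X Z (J Y) (J U), hR.2.2.1 X Z (J Y) (J U),
    hR.1 X (J Z) (J Y) U, hR.2.2.1 X (J Z) (J Y) U, hR.1 (J X) Z Y (J U),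
    hR.2.2.1 (J X) Z Y (J U), hR.1 (J X) (J Z) Y U, hR.2.2.1 (J X) (J Z) Y U,
    hR.1 X U (J Y) (J Z), hR.1 X (J U) (J Y) Z, hR.1 (J X) U Y (J Z),
    hR.1 (J X) (J U) Y Z]

lemma Rstar_pair (hR : CurvatureLike R) (X Y Z U : V) :
    Rstar J R Z U X Y = Rstar J R X Y Z U := by
  simp only [Rstar]
  linarith [hR.2.2.1 X Y Z U, hR.2.2.1 X Y (J Z) (J U), hR.2.2.1 X (J Y) Z (J U),
    hR.2.2.2 X (J Y) Z (J U), hR.2.2.1 X (J Y) (J Z) U, hR.2.2.2 X (J Y) (J Z) U,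
    hR.2.2.1 (J X) Y Z (J U), hR.2.2.2 (J X) Y Z (J U), hR.2.2.1 (J X) Y (J Z) U,
    hR.2.2.2 (J X) Y (J Z) U, hR.2.2.1 (J X) (J Y) Z U, hR.2.2.1 (J X) (J Y) (J Z) (J U),
    hR.1 X Z (J Y) (J U), hR.2.1 X Z (J Y) (J U), hR.1 X (J Z) (J Y) U,
    hR.2.1 X (J Z) (J Y) U, hR.1 (J X) Z Y (J U), hR.2.1 (J X) Z Y (J U),
    hR.1 (J X) (J Z) Y U, hR.2.1 (J X) (J Z) Y U, hR.1 X Z (J U) (J Y),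
    hR.2.2.2 X Z (J U) (J Y), hR.1 X (J Z) U (J Y), hR.2.2.2 X (J Z) U (J Y),
    hR.1 (J X) Z (J U) Y, hR.2.2.2 (J X) Z (J U) Y, hR.1 (J X) (J Z) U Y,
    hR.2.2.2 (J X) (J Z) U Y]

lemma Rstar_bianchi (hR : CurvatureLike R) (X Y Z U : V) :
    Rstar J R X Y Z U + Rstar J R Y Z X U + Rstar J R Z X Y U = 0 := by
  simp only [Rstar]
  linarith [hR.2.2.2 X Y Z U, hR.1 X Y (J Z) (J U), hR.1 X (J Y) Z (J U),
    hR.2.2.2 X (J Y) Z (J U), hR.1 X (J Y) (J Z) U, hR.2.2.2 X (J Y) (J Z) U,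
    hR.1 (J X) Y Z (J U), hR.2.2.2 (J X) Y Z (J U), hR.1 (J X) Y (J Z) U,
    hR.2.2.2 (J X) Y (J Z) U, hR.1 (J X) (J Y) Z U, hR.2.2.2 (J X) (J Y) (J Z) (J U),
    hR.1 X Z (J Y) (J U), hR.1 X (J Z) Y (J U), hR.2.2.2 X (J Z) Y (J U),
    hR.1 X (J Z) (J Y) U, hR.2.2.2 X (J Z) (J Y) U, hR.1 (J X) Z Y (J U),
    hR.2.2.2 (J X) Z Y (J U), hR.1 (J X) Z (J Y) U, hR.2.2.2 (J X) Z (J Y) U,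
    hR.1 (J X) (J Z) Y U]

lemma Rstar_hol (hJ2 : ∀ v : V, J (J v) = -v) (hR : CurvatureLike R) (X : V) :
    Rstar J R X (J X) (J X) X = R X (J X) (J X) X := by
  simp only [Rstar, hJ2, map_neg, T4_neg1, T4_neg2, T4_neg3, LinearMap.neg_apply, neg_neg]
  linarith [hR.1 X X X X, hR.1 X X (J X) (J X), hR.2.2.2 X X (J X) (J X),
    hR.2.1 X (J X) X (J X), hR.1 X (J X) (J X) X, hR.1 (J X) (J X) (J X) (J X)]

lemma Rstar_k1L (hJ2 : ∀ v : V, J (J v) = -v) (p q r s : V) :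
    Rstar J R (J p) q r s = - Rstar J R p (J q) r s := by
  have h := Rstar_k1 J R hJ2 (J p) q r s
  rw [hJ2, Rstar_neg1] at h
  linarith

lemma Rstar_k2L (hJ2 : ∀ v : V, J (J v) = -v) (X Y r s : V) :
    Rstar J R X Y (J r) s = - Rstar J R X Y r (J s) := by
  have h := Rstar_k2 J R hJ2 X Y r (J s)
  rw [hJ2, Rstar_neg4] at h
  linarith

lemma flat_E1 (hJ2 : ∀ v : V, J (J v) = -v) (hR : CurvatureLike R)
    (hflat : ∀ v : V, Rstar J R v (J v) (J v) v = 0) (X Y : V) :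
    Rstar J R X (J X) (J X) Y = 0 := by
  have h11 := hflat (X + Y)
  have h12 := hflat (X + (Y + Y))
  have h21 := hflat ((X + X) + Y)
  simp only [map_add, Rstar_add1, Rstar_add2, Rstar_add3, Rstar_add4] at h11 h12 h21
  have r1 : Rstar J R Y (J X) (J X) X = Rstar J R X (J X) (J X) Y := by
    have p := Rstar_pair J R hR (J X) X Y (J X)
    have a := Rstar_a1 J R hR X (J X) Y (J X)
    have a2 := Rstar_a2 J R hR X (J X) (J X) Y
    linarith
  have r2 : Rstar J R X (J Y) (J X) X = Rstar J R X (J X) (J X) Y := by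
    have k := Rstar_k1L J R hJ2 X Y (J X) X
    have a := Rstar_a1 J R hR (J X) Y (J X) X
    linarith [r1]
  have r3 : Rstar J R X (J X) (J Y) X = Rstar J R X (J X) (J X) Y := by
    have k := Rstar_k2L J R hJ2 X (J X) Y X
    have a2 := Rstar_a2 J R hR X (J X) (J X) Y
    linarith
  linarith [hflat X, hflat Y]

lemma flat_E4 (hJ2 : ∀ v : V, J (J v) = -v) (hR : CurvatureLike R)
    (hflat : ∀ v : V, Rstar J R v (J v) (J v) v = 0) (a b c Y : V) :
    Rstar J R a (J b) (J c) Y + Rstar J R a (J c) (J b) Y + Rstar J R b (J a) (J c) Y +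
      Rstar J R b (J c) (J a) Y + Rstar J R c (J a) (J b) Y + Rstar J R c (J b) (J a) Y = 0 := by
  have h1 := flat_E1 J R hJ2 hR hflat (a + (b + c)) Y
  have h2 := flat_E1 J R hJ2 hR hflat (a + b) Y
  have h3 := flat_E1 J R hJ2 hR hflat (a + c) Y
  have h4 := flat_E1 J R hJ2 hR hflat (b + c) Y
  have h5 := flat_E1 J R hJ2 hR hflat a Y
  have h6 := flat_E1 J R hJ2 hR hflat b Y
  have h7 := flat_E1 J R hJ2 hR hflat c Y
  simp only [map_add, Rstar_add1, Rstar_add2, Rstar_add3] at h1 h2 h3 h4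
  linarith

lemma flat_aux (hJ2 : ∀ v : V, J (J v) = -v) (hR : CurvatureLike R)
    (hflat : ∀ v : V, Rstar J R v (J v) (J v) v = 0) (a b c d : V) :
    Rstar J R b c a d = 0 := by
  have t1 := flat_E4 J R hJ2 hR hflat a (J b) (J c) d
  have t2 := flat_E4 J R hJ2 hR hflat b (J c) (J a) d
  have t3 := flat_E4 J R hJ2 hR hflat c (J a) (J b) d
  simp only [hJ2, Rstar_neg1, Rstar_neg2, Rstar_neg3, neg_neg] at t1 t2 t3
  have rb1 := Rstar_k1 J R hJ2 b a c d
  have rb2 := Rstar_a1 J R hR a b c d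
  have rb3 := Rstar_k1L J R hJ2 b c (J a) d
  have rc1 := Rstar_k1 J R hJ2 c a b d
  have rc2 := Rstar_a1 J R hR a c b d
  have rc3 := Rstar_k1L J R hJ2 c b (J a) d
  have sb1 := Rstar_k1 J R hJ2 c b a d
  have sb2 := Rstar_a1 J R hR b c a d
  have sb3 := Rstar_k1L J R hJ2 c a (J b) d
  have sc1 := Rstar_k1 J R hJ2 a b c d
  have sc2 := Rstar_a1 J R hR b a c d
  have sc3 := Rstar_k1L J R hJ2 a c (J b) d
  have ub1 := Rstar_k1 J R hJ2 a c b d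
  have ub2 := Rstar_a1 J R hR c a b d
  have ub3 := Rstar_k1L J R hJ2 a b (J c) d
  have uc1 := Rstar_k1 J R hJ2 b c a d
  have uc2 := Rstar_a1 J R hR c b a d
  have uc3 := Rstar_k1L J R hJ2 b a (J c) d
  have s1a := Rstar_a1 J R hR a (J b) (J c) d
  have s1b := Rstar_k1L J R hJ2 b a (J c) d
  have s2a := Rstar_a1 J R hR a (J c) (J b) d
  have s2b := Rstar_k1L J R hJ2 c a (J b) d
  have s3a := Rstar_a1 J R hR b (J c) (J a) d
  have s3b := Rstar_k1L J R hJ2 c b (J a) d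
  have bi1 := Rstar_bianchi J R hR a (J b) (J c) d
  have bi1a := Rstar_k1 J R hJ2 b c a d
  have bi1b := Rstar_k1L J R hJ2 c a (J b) d
  have bi2 := Rstar_bianchi J R hR a b c d
  have bi2a := Rstar_a1 J R hR a c b d
  linarith

lemma Rstar_flat (hJ2 : ∀ v : V, J (J v) = -v) (hR : CurvatureLike R)
    (hflat : ∀ v : V, Rstar J R v (J v) (J v) v = 0) (X Y Z U : V) :
    Rstar J R X Y Z U = 0 :=
  flat_aux J R hJ2 hR hflat Z X Y U

end AuxLemmas

section AuxLemmas2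

variable (J : V →ₗ[ℝ] V) (R : Tensor4 V) {ι : Type*} [Fintype ι]

lemma ricStar_add1 (b : OrthonormalBasis ι ℝ V) (v w y : V) :
    ricStar J b R (v + w) y = ricStar J b R v y + ricStar J b R w y := by
  unfold ricStar
  rw [← Finset.sum_add_distrib]
  exact Finset.sum_congr rfl fun i _ => Rstar_add1 J R v w (b i) (b i) y

lemma ricStar_add2 (b : OrthonormalBasis ι ℝ V) (v w y : V) :
    ricStar J b R y (v + w) = ricStar J b R y v + ricStar J b R y w := by
  unfold ricStar
  rw [← Finset.sum_add_distrib]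
  exact Finset.sum_congr rfl fun i _ => Rstar_add4 J R y (b i) (b i) v w

lemma ricStar_zero1 (b : OrthonormalBasis ι ℝ V) (y : V) :
    ricStar J b R 0 y = 0 := by
  unfold ricStar
  exact Finset.sum_eq_zero fun i _ => Rstar_zero1 J R (b i) (b i) y

lemma ricStar_zero2 (b : OrthonormalBasis ι ℝ V) (y : V) :
    ricStar J b R y 0 = 0 := by
  unfold ricStar
  exact Finset.sum_eq_zero fun i _ => Rstar_zero4 J R y (b i) (b i)

lemma ricStar_symm (hR : CurvatureLike R) (b : OrthonormalBasis ι ℝ V) (v w : V) :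
    ricStar J b R v w = ricStar J b R w v := by
  unfold ricStar
  refine Finset.sum_congr rfl fun i _ => ?_
  have a1 := Rstar_a1 J R hR v (b i) (b i) w
  have a2 := Rstar_a2 J R hR (b i) v w (b i)
  have p := Rstar_pair J R hR w (b i) (b i) v
  linarith

lemma Rstar_prod_mixed (W : Fin 3 → Submodule ℝ V)
    (hJW : ∀ j, ∀ x ∈ W j, J x ∈ W j) (hWJ' : ∀ j x, J x ∈ W j → x ∈ W j)
    (hprod : ∀ X Y Z U : V, (∃ i, X ∈ W i) → (∃ i, Y ∈ W i) → (∃ i, Z ∈ W i) →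
      (∃ i, U ∈ W i) → (¬ ∃ j, X ∈ W j ∧ Y ∈ W j ∧ Z ∈ W j ∧ U ∈ W j) →
      R X Y Z U = 0)
    {a b c d : Fin 3} {x y z u : V}
    (hx : x ∈ W a) (hy : y ∈ W b) (hz : z ∈ W c) (hu : u ∈ W d)
    (h : ¬ ∃ j, x ∈ W j ∧ y ∈ W j ∧ z ∈ W j ∧ u ∈ W j) :
    Rstar J R x y z u = 0 := by
  have h1 : R x y z u = 0 :=
    hprod _ _ _ _ ⟨a, hx⟩ ⟨b, hy⟩ ⟨c, hz⟩ ⟨d, hu⟩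
      (by rintro ⟨j, m1, m2, m3, m4⟩; exact h ⟨j, m1, m2, m3, m4⟩)
  have h2 : R x y (J z) (J u) = 0 :=
    hprod _ _ _ _ ⟨a, hx⟩ ⟨b, hy⟩ ⟨c, hJW c z hz⟩ ⟨d, hJW d u hu⟩
      (by rintro ⟨j, m1, m2, m3, m4⟩; exact h ⟨j, m1, m2, hWJ' j z m3, hWJ' j u m4⟩)
  have h3 : R (J x) (J y) z u = 0 :=
    hprod _ _ _ _ ⟨a, hJW a x hx⟩ ⟨b, hJW b y hy⟩ ⟨c, hz⟩ ⟨d, hu⟩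
      (by rintro ⟨j, m1, m2, m3, m4⟩; exact h ⟨j, hWJ' j x m1, hWJ' j y m2, m3, m4⟩)
  have h4 : R (J x) (J y) (J z) (J u) = 0 :=
    hprod _ _ _ _ ⟨a, hJW a x hx⟩ ⟨b, hJW b y hy⟩ ⟨c, hJW c z hz⟩ ⟨d, hJW d u hu⟩
      (by
        rintro ⟨j, m1, m2, m3, m4⟩
        exact h ⟨j, hWJ' j x m1, hWJ' j y m2, hWJ' j z m3, hWJ' j u m4⟩)
  have h5 : R (J x) (J z) y u = 0 :=
    hprod _ _ _ _ ⟨a, hJW a x hx⟩ ⟨c, hJW c z hz⟩ ⟨b, hy⟩ ⟨d, hu⟩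
      (by rintro ⟨j, m1, m2, m3, m4⟩; exact h ⟨j, hWJ' j x m1, m3, hWJ' j z m2, m4⟩)
  have h6 : R (J y) (J z) x u = 0 :=
    hprod _ _ _ _ ⟨b, hJW b y hy⟩ ⟨c, hJW c z hz⟩ ⟨a, hx⟩ ⟨d, hu⟩
      (by rintro ⟨j, m1, m2, m3, m4⟩; exact h ⟨j, m3, hWJ' j y m1, hWJ' j z m2, m4⟩)
  have h7 : R x z (J y) (J u) = 0 :=
    hprod _ _ _ _ ⟨a, hx⟩ ⟨c, hz⟩ ⟨b, hJW b y hy⟩ ⟨d, hJW d u hu⟩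
      (by rintro ⟨j, m1, m2, m3, m4⟩; exact h ⟨j, m1, hWJ' j y m3, m2, hWJ' j u m4⟩)
  have h8 : R y z (J x) (J u) = 0 :=
    hprod _ _ _ _ ⟨b, hy⟩ ⟨c, hz⟩ ⟨a, hJW a x hx⟩ ⟨d, hJW d u hu⟩
      (by rintro ⟨j, m1, m2, m3, m4⟩; exact h ⟨j, hWJ' j x m3, m1, m2, hWJ' j u m4⟩)
  have h9 : R y (J z) (J x) u = 0 :=
    hprod _ _ _ _ ⟨b, hy⟩ ⟨c, hJW c z hz⟩ ⟨a, hJW a x hx⟩ ⟨d, hu⟩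
      (by rintro ⟨j, m1, m2, m3, m4⟩; exact h ⟨j, hWJ' j x m3, m1, hWJ' j z m2, m4⟩)
  have h10 : R x (J z) (J y) u = 0 :=
    hprod _ _ _ _ ⟨a, hx⟩ ⟨c, hJW c z hz⟩ ⟨b, hJW b y hy⟩ ⟨d, hu⟩
      (by rintro ⟨j, m1, m2, m3, m4⟩; exact h ⟨j, m1, hWJ' j y m3, hWJ' j z m2, m4⟩)
  have h11 : R (J y) z x (J u) = 0 :=
    hprod _ _ _ _ ⟨b, hJW b y hy⟩ ⟨c, hz⟩ ⟨a, hx⟩ ⟨d, hJW d u hu⟩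
      (by rintro ⟨j, m1, m2, m3, m4⟩; exact h ⟨j, m3, hWJ' j y m1, m2, hWJ' j u m4⟩)
  have h12 : R (J x) z y (J u) = 0 :=
    hprod _ _ _ _ ⟨a, hJW a x hx⟩ ⟨c, hz⟩ ⟨b, hy⟩ ⟨d, hJW d u hu⟩
      (by rintro ⟨j, m1, m2, m3, m4⟩; exact h ⟨j, hWJ' j x m1, m3, m2, hWJ' j u m4⟩)
  simp [Rstar, h1, h2, h3, h4, h5, h6, h7, h8, h9, h10, h11, h12]

end AuxLemmas2

/-- Corollary 2.2, pointwise form. -/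
theorem Bstar_eq_zero_iff_flat_of_three_factors {V : Type*} [NormedAddCommGroup V]
    [InnerProductSpace ℝ V] [FiniteDimensional ℝ V] {m : ℕ}
    (hm : 1 ≤ m) (hdim : Module.finrank ℝ V = 2 * m)
    (J : V →ₗ[ℝ] V) (hJ : OrthJ J) (R : Tensor4 V) (hR : CurvatureLike R)
    (b : OrthonormalBasis (Fin (2 * m)) ℝ V)
    (W : Fin 3 → Submodule ℝ V)
    (hne : ∀ j, W j ≠ ⊥)
    (horth : ∀ i j, i ≠ j → ∀ x ∈ W i, ∀ y ∈ W j, ⟪x, y⟫ = (0 : ℝ))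
    (hsup : (⨆ j, W j) = ⊤)
    (hJW : ∀ j, ∀ x ∈ W j, J x ∈ W j)
    (hprod : ∀ X Y Z U : V, (∃ i, X ∈ W i) → (∃ i, Y ∈ W i) → (∃ i, Z ∈ W i) →
      (∃ i, U ∈ W i) → (¬ ∃ j, X ∈ W j ∧ Y ∈ W j ∧ Z ∈ W j ∧ U ∈ W j) →
      R X Y Z U = 0) :
    (∀ X Y Z U : V, Bstar m J b R X Y Z U = 0) ↔
      ∀ X : V, R X (J X) (J X) X = 0 := by
  have hJ2 := hJ.1
  have hWJ' : ∀ j x, J x ∈ W j → x ∈ W j := fun j x hx => by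
    have h2 := hJW j (J x) hx
    rw [hJ2] at h2
    simpa using neg_mem h2
  have hJs : ∀ x : V, ⟪x, J x⟫ = (0:ℝ) := fun x => by
    have h := hJ.2 x (J x)
    rw [hJ2, inner_neg_right] at h
    have hc := real_inner_comm x (J x)
    linarith
  have huniq : ∀ {i j : Fin 3} {x : V}, x ∈ W i → x ∈ W j → x ≠ 0 → i = j := by
    intro i j x hxi hxj hx0
    by_contra hij
    exact hx0 (inner_self_eq_zero.mp (horth i j hij x hxi x hxj))
  have hdecomp : ∀ v : V, ∃ v0 v1 v2 : V,
      v0 ∈ W 0 ∧ v1 ∈ W 1 ∧ v2 ∈ W 2 ∧ v = v0 + v1 + v2 := by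
    intro v
    have hv : v ∈ W 0 ⊔ W 1 ⊔ W 2 := by
      have hle : (⨆ j, W j) ≤ W 0 ⊔ W 1 ⊔ W 2 := by
        apply iSup_le
        intro j
        fin_cases j
        · exact le_sup_of_le_left le_sup_left
        · exact le_sup_of_le_left le_sup_right
        · exact le_sup_right
      exact hle (hsup ▸ Submodule.mem_top)
    obtain ⟨y01, hy01, z2, hz2, hv2⟩ := Submodule.mem_sup.mp hv
    obtain ⟨v0, hv0, v1, hv1, hv01⟩ := Submodule.mem_sup.mp hy01
    exact ⟨v0, v1, z2, hv0, hv1, hz2, by rw [← hv2, ← hv01]⟩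
  constructor
  · -- forward direction
    intro hB
    obtain ⟨y0, hy0W, hy0⟩ := (Submodule.ne_bot_iff (W 0)).mp (hne 0)
    obtain ⟨y1, hy1W, hy1⟩ := (Submodule.ne_bot_iff (W 1)).mp (hne 1)
    obtain ⟨y2, hy2W, hy2⟩ := (Submodule.ne_bot_iff (W 2)).mp (hne 2)
    have hm2 : ((m:ℝ) + 2) ≠ 0 := by positivity
    have hm1 : ((m:ℝ) + 1) ≠ 0 := by positivity
    have hricmixed : ∀ {i j : Fin 3} {p q : V}, i ≠ j → p ∈ W i → q ∈ W j →
        ricStar J b R p q = 0 := by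
      intro i j p q hij hp hq
      rcases eq_or_ne p 0 with rfl | hp0
      · exact ricStar_zero1 J R b q
      rcases eq_or_ne q 0 with rfl | hq0
      · exact ricStar_zero2 J R b p
      unfold ricStar
      apply Finset.sum_eq_zero
      intro k _
      obtain ⟨e0, e1, e2, he0, he1, he2, hbe⟩ := hdecomp (b k)
      have hmix : ∀ {c c' : Fin 3} {y z : V}, y ∈ W c → z ∈ W c' →
          Rstar J R p y z q = 0 := by
        intro c c' y z hy hz
        apply Rstar_prod_mixed J R W hJW hWJ' hprod hp hy hz hq
        rintro ⟨j', m1, _, _, m4⟩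
        exact hij ((huniq hp m1 hp0).trans (huniq m4 hq hq0))
      rw [hbe, Rstar_add2, Rstar_add2, Rstar_add3, Rstar_add3, Rstar_add3,
        Rstar_add3, Rstar_add3, Rstar_add3]
      rw [hmix he0 he0, hmix he0 he1, hmix he0 he2, hmix he1 he0, hmix he1 he1,
        hmix he1 he2, hmix he2 he0, hmix he2 he1, hmix he2 he2]
      ring
    have hkey : ∀ {i j : Fin 3} {p q : V}, i ≠ j → p ∈ W i → q ∈ W j → p ≠ 0 → q ≠ 0 →
        2*((m:ℝ)+1) * (⟪p,p⟫ * ricStar J b R q q + ⟪q,q⟫ * ricStar J b R p p)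
          = scalStar J b R * (⟪p,p⟫ * ⟪q,q⟫) := by
      intro i j p q hij hp hq hp0 hq0
      have hB1 := hB p q q p
      have hRs : Rstar J R p q q p = 0 := by
        apply Rstar_prod_mixed J R W hJW hWJ' hprod hp hq hq hp
        rintro ⟨j', m1, m2, _, _⟩
        exact hij ((huniq hp m1 hp0).trans (huniq m2 hq hq0))
      have i1 : ⟪p,q⟫ = (0:ℝ) := horth i j hij p hp q hq
      have i2 : ⟪q,p⟫ = (0:ℝ) := horth j i hij.symm q hq p hp
      have i3 : ⟪p, J q⟫ = (0:ℝ) := horth i j hij p hp (J q) (hJW j q hq)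
      have i4 : ⟪q, J p⟫ = (0:ℝ) := horth j i hij.symm q hq (J p) (hJW i p hp)
      have i5 := hJs p
      have i6 := hJs q
      simp only [Bstar, phi, psi, pi1, pi2, hRs, i1, i2, i3, i4, i5, i6] at hB1
      field_simp at hB1
      have key2 : (2*((m:ℝ)+2)) * (2*((m:ℝ)+1) *
            (⟪p,p⟫ * ricStar J b R q q + ⟪q,q⟫ * ricStar J b R p p)) =
          (2*((m:ℝ)+2)) * (scalStar J b R * (⟪p,p⟫ * ⟪q,q⟫)) := by
        linear_combination -((m:ℝ)+2) * hB1
      exact mul_left_cancel₀ (by positivity) key2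
    have hdiag : ∀ (i : Fin 3) (p : V), p ∈ W i →
        4*((m:ℝ)+1) * ricStar J b R p p = scalStar J b R * ⟪p,p⟫ := by
      intro i p hp
      rcases eq_or_ne p 0 with rfl | hp0
      · simp [ricStar_zero1 J R b]
      fin_cases i
      · have e1 := hkey (show (0:Fin 3) ≠ 1 by decide) hp hy1W hp0 hy1
        have e2 := hkey (show (0:Fin 3) ≠ 2 by decide) hp hy2W hp0 hy2
        have e3 := hkey (show (1:Fin 3) ≠ 2 by decide) hy1W hy2W hy1 hy2
        have hn1 : 0 < ⟪y1,y1⟫ :=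
          lt_of_le_of_ne real_inner_self_nonneg (fun hc => hy1 (inner_self_eq_zero.mp hc.symm))
        have hn2 : 0 < ⟪y2,y2⟫ :=
          lt_of_le_of_ne real_inner_self_nonneg (fun hc => hy2 (inner_self_eq_zero.mp hc.symm))
        have hc : (4*((m:ℝ)+1) * ricStar J b R p p - scalStar J b R * ⟪p,p⟫)
            * (⟪y1,y1⟫ * ⟪y2,y2⟫) = 0 := by
          linear_combination ⟪y2,y2⟫ * e1 + ⟪y1,y1⟫ * e2 - ⟪p,p⟫ * e3
        rcases mul_eq_zero.mp hc with h' | h'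
        · linarith
        · nlinarith
      · have e1 := hkey (show (1:Fin 3) ≠ 0 by decide) hp hy0W hp0 hy0
        have e2 := hkey (show (1:Fin 3) ≠ 2 by decide) hp hy2W hp0 hy2
        have e3 := hkey (show (0:Fin 3) ≠ 2 by decide) hy0W hy2W hy0 hy2
        have hn1 : 0 < ⟪y0,y0⟫ :=
          lt_of_le_of_ne real_inner_self_nonneg (fun hc => hy0 (inner_self_eq_zero.mp hc.symm))
        have hn2 : 0 < ⟪y2,y2⟫ :=
          lt_of_le_of_ne real_inner_self_nonneg (fun hc => hy2 (inner_self_eq_zero.mp hc.symm))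
        have hc : (4*((m:ℝ)+1) * ricStar J b R p p - scalStar J b R * ⟪p,p⟫)
            * (⟪y0,y0⟫ * ⟪y2,y2⟫) = 0 := by
          linear_combination ⟪y2,y2⟫ * e1 + ⟪y0,y0⟫ * e2 - ⟪p,p⟫ * e3
        rcases mul_eq_zero.mp hc with h' | h'
        · linarith
        · nlinarith
      · have e1 := hkey (show (2:Fin 3) ≠ 0 by decide) hp hy0W hp0 hy0
        have e2 := hkey (show (2:Fin 3) ≠ 1 by decide) hp hy1W hp0 hy1
        have e3 := hkey (show (0:Fin 3) ≠ 1 by decide) hy0W hy1W hy0 hy1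
        have hn1 : 0 < ⟪y0,y0⟫ :=
          lt_of_le_of_ne real_inner_self_nonneg (fun hc => hy0 (inner_self_eq_zero.mp hc.symm))
        have hn2 : 0 < ⟪y1,y1⟫ :=
          lt_of_le_of_ne real_inner_self_nonneg (fun hc => hy1 (inner_self_eq_zero.mp hc.symm))
        have hc : (4*((m:ℝ)+1) * ricStar J b R p p - scalStar J b R * ⟪p,p⟫)
            * (⟪y0,y0⟫ * ⟪y1,y1⟫) = 0 := by
          linear_combination ⟪y1,y1⟫ * e1 + ⟪y0,y0⟫ * e2 - ⟪p,p⟫ * e3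
        rcases mul_eq_zero.mp hc with h' | h'
        · linarith
        · nlinarith
    have hsame : ∀ (i : Fin 3) (p q : V), p ∈ W i → q ∈ W i →
        4*((m:ℝ)+1) * ricStar J b R p q = scalStar J b R * ⟪p,q⟫ := by
      intro i p q hp hq
      have h1 := hdiag i p hp
      have h2 := hdiag i q hq
      have h3 := hdiag i (p+q) (add_mem hp hq)
      rw [ricStar_add1, ricStar_add2, ricStar_add2, real_inner_add_add_self] at h3
      have hsym := ricStar_symm J R hR b p q
      linear_combination h3/2 - h1/2 - h2/2 + 2*((m:ℝ)+1)*hsym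
    have hglob : ∀ p q : V, 4*((m:ℝ)+1) * ricStar J b R p q = scalStar J b R * ⟪p,q⟫ := by
      intro p q
      obtain ⟨p0, p1, p2, hp0, hp1, hp2, rfl⟩ := hdecomp p
      obtain ⟨q0, q1, q2, hq0, hq1, hq2, rfl⟩ := hdecomp q
      have e00 := hsame 0 p0 q0 hp0 hq0
      have e11 := hsame 1 p1 q1 hp1 hq1
      have e22 := hsame 2 p2 q2 hp2 hq2
      have m01 := hricmixed (show (0:Fin 3) ≠ 1 by decide) hp0 hq1
      have m02 := hricmixed (show (0:Fin 3) ≠ 2 by decide) hp0 hq2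
      have m10 := hricmixed (show (1:Fin 3) ≠ 0 by decide) hp1 hq0
      have m12 := hricmixed (show (1:Fin 3) ≠ 2 by decide) hp1 hq2
      have m20 := hricmixed (show (2:Fin 3) ≠ 0 by decide) hp2 hq0
      have m21 := hricmixed (show (2:Fin 3) ≠ 1 by decide) hp2 hq1
      have o01 : ⟪p0,q1⟫ = (0:ℝ) := horth 0 1 (by decide) p0 hp0 q1 hq1
      have o02 : ⟪p0,q2⟫ = (0:ℝ) := horth 0 2 (by decide) p0 hp0 q2 hq2
      have o10 : ⟪p1,q0⟫ = (0:ℝ) := horth 1 0 (by decide) p1 hp1 q0 hq0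
      have o12 : ⟪p1,q2⟫ = (0:ℝ) := horth 1 2 (by decide) p1 hp1 q2 hq2
      have o20 : ⟪p2,q0⟫ = (0:ℝ) := horth 2 0 (by decide) p2 hp2 q0 hq0
      have o21 : ⟪p2,q1⟫ = (0:ℝ) := horth 2 1 (by decide) p2 hp2 q1 hq1
      rw [ricStar_add1, ricStar_add1, ricStar_add2, ricStar_add2, ricStar_add2,
        ricStar_add2, ricStar_add2, ricStar_add2]
      have hin : ⟪p0+p1+p2, q0+q1+q2⟫ = ⟪p0,q0⟫ + ⟪p1,q1⟫ + ⟪p2,q2⟫ := by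
        simp [inner_add_left, inner_add_right, o01, o02, o10, o12, o20, o21]
      rw [hin]
      linear_combination e00 + e11 + e22 + 4*((m:ℝ)+1)*m01 + 4*((m:ℝ)+1)*m02 +
        4*((m:ℝ)+1)*m10 + 4*((m:ℝ)+1)*m12 + 4*((m:ℝ)+1)*m20 + 4*((m:ℝ)+1)*m21
    have hbnorm : ∀ i : Fin (2*m), ⟪b i, b i⟫ = (1:ℝ) := fun i => by
      have hn := b.orthonormal.1 i
      rw [real_inner_self_eq_norm_mul_norm, hn]; norm_num
    have htau : scalStar J b R = 0 := by
      have h1 : 4*((m:ℝ)+1) * scalStar J b R = scalStar J b R * (2*(m:ℝ)) := by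
        calc 4*((m:ℝ)+1) * scalStar J b R
            = ∑ i, 4*((m:ℝ)+1) * ricStar J b R (b i) (b i) := by
              unfold scalStar; rw [Finset.mul_sum]
          _ = ∑ _i : Fin (2*m), scalStar J b R * 1 :=
              Finset.sum_congr rfl (fun i _ => by rw [hglob, hbnorm])
          _ = scalStar J b R * (2*(m:ℝ)) := by
              rw [Finset.sum_const, Finset.card_univ]
              simp
              ring
      have h2 : (2*(m:ℝ)+4) * scalStar J b R = 0 := by linear_combination h1
      have hpos : (0:ℝ) < 2*(m:ℝ)+4 := by positivity
      rcases mul_eq_zero.mp h2 with h' | h'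
      · exact absurd h' (ne_of_gt hpos)
      · exact h'
    have hS0 : ∀ p q : V, ricStar J b R p q = 0 := by
      intro p q
      have h := hglob p q
      rw [htau] at h
      have h4 : (0:ℝ) < 4*((m:ℝ)+1) := by positivity
      have h5 : 4*((m:ℝ)+1) * ricStar J b R p q = 0 := by linarith [h]
      rcases mul_eq_zero.mp h5 with h' | h'
      · exact absurd h' (ne_of_gt h4)
      · exact h'
    intro X
    have hBX := hB X (J X) (J X) X
    simp [Bstar, phi, psi, pi1, pi2, hS0, htau] at hBX
    rw [← Rstar_hol J R hJ2 hR X]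
    linarith [hBX]
  · -- backward direction
    intro hK X Y Z U
    have hflat : ∀ v : V, Rstar J R v (J v) (J v) v = 0 := fun v =>
      (Rstar_hol J R hJ2 hR v).trans (hK v)
    have hzero := Rstar_flat J R hJ2 hR hflat
    have hric : ∀ p q : V, ricStar J b R p q = 0 := by
      intro p q
      unfold ricStar
      exact Finset.sum_eq_zero fun i _ => hzero p (b i) (b i) q
    have hscal : scalStar J b R = 0 := by
      unfold scalStar
      exact Finset.sum_eq_zero fun i _ => hric (b i) (b i)
    simp [Bstar, phi, psi, hzero, hric, hscal]
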